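/- arXiv:2308.03246 — 2 statements merged into one kernel-verified Lean document; each statement's English description precedes it below -/
import Mathlib

section
/- For the Freud weight w(x;t) = exp(−x⁴ + t x²) with t ∈ ℝ, the nontrivial leading coefficients satisfy the second-order nonlinear difference equation: for every n ≥ 1, (p(n−1,t) − p(n+1,t))·[n + 2t(p(n,t) − p(n+1,t)) − 4(p(n−1,t) − p(n,t))(p(n,t) − p(n+1,t))] + p(n,t) + p(n+1,t) − 2t(p(n,t) − p(n+1,t))² = 0. -/
open MeasureTheory Real

namespace Stmt16Aux

open Polynomial Nat Filter


lemma mono_bound (t : ℝ) (k : ℕ) : ∃ C : ℝ, 0 ≤ C ∧ ∀ x : ℝ,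
    |x|^k * Real.exp (-x^4 + t*x^2) ≤ C * Real.exp (-x^2) := by
  set K : ℝ := 1 + (k ! : ℝ) * (4/3)^k with hK
  have hKpos : (0:ℝ) < K := by positivity
  refine ⟨K * Real.exp ((t+1)^2), by positivity, fun x => ?_⟩
  rw [← le_div_iff₀ (exp_pos _), mul_div_assoc, ← exp_sub]
  have h1 : -x^2 - (-x^4 + t*x^2) = x^4 - (t+1)*x^2 := by ring
  rw [h1]
  have h4 : ((3/4:ℝ)*x^4)^k / (k ! : ℝ) ≤ Real.exp ((3/4:ℝ)*x^4) :=
    Real.pow_div_factorial_le_exp _ (by positivity) k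
  have h5 : |x|^k ≤ 1 + (x^4)^k := by
    rcases le_total (|x|) 1 with h | h
    · have h6 : |x|^k ≤ 1 := pow_le_one₀ (abs_nonneg x) h
      have h7 : (0:ℝ) ≤ (x^4)^k := by positivity
      linarith
    · have : |x|^k ≤ (x^4)^k := by
        apply pow_le_pow_left₀ (abs_nonneg x)
        have h8 : |x| ≤ |x|^4 := le_self_pow₀ h (by norm_num)
        have h9 : |x|^4 = x^4 := by
          have := sq_abs x
          nlinarith [sq_abs x]
        linarith
      linarith
  have hmid : (x^4)^k ≤ (k ! : ℝ) * (4/3)^k * Real.exp ((3/4:ℝ)*x^4) := by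
    have hx : ((3/4:ℝ)*x^4)^k = (3/4:ℝ)^k * (x^4)^k := mul_pow _ _ _
    have hf : (0:ℝ) < (k ! : ℝ) := by positivity
    rw [hx, div_le_iff₀ hf] at h4
    have h9 : (0:ℝ) < (4/3:ℝ)^k := by positivity
    have h10 : ((4:ℝ)/3)^k * ((3/4:ℝ)^k * (x^4)^k) = (x^4)^k := by
      rw [← mul_assoc, ← mul_pow]; norm_num
    calc (x^4)^k = (4/3:ℝ)^k * ((3/4:ℝ)^k * (x^4)^k) := h10.symm
      _ ≤ (4/3:ℝ)^k * (Real.exp ((3/4:ℝ)*x^4) * (k ! : ℝ)) := by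
          apply mul_le_mul_of_nonneg_left h4 (le_of_lt h9)
      _ = (k ! : ℝ) * (4/3)^k * Real.exp ((3/4:ℝ)*x^4) := by ring
  have hexp1 : Real.exp ((t+1)^2) * Real.exp (x^4 - (t+1)*x^2) ≥ Real.exp ((3/4:ℝ)*x^4) := by
    rw [← exp_add]
    apply exp_le_exp.2
    nlinarith [sq_nonneg (x^2/2 - (t+1))]
  have hone : (1:ℝ) ≤ Real.exp ((3/4:ℝ)*x^4) := Real.one_le_exp (by positivity)
  calc |x|^k ≤ 1 + (x^4)^k := h5
    _ ≤ K * Real.exp ((3/4:ℝ)*x^4) := by rw [hK]; nlinarith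
    _ ≤ K * (Real.exp ((t+1)^2) * Real.exp (x^4 - (t+1)*x^2)) :=
        mul_le_mul_of_nonneg_left hexp1 (le_of_lt hKpos)
    _ = K * Real.exp ((t+1)^2) * Real.exp (x^4 - (t+1)*x^2) := by ring

lemma integrable_mono_w (t : ℝ) (k : ℕ) :
    Integrable (fun x : ℝ => x^k * Real.exp (-x^4 + t*x^2)) := by
  obtain ⟨C, hC0, hC⟩ := mono_bound t k
  have hg : Integrable (fun x : ℝ => C * Real.exp (-x^2)) := by
    have := (integrable_exp_neg_mul_sq (by norm_num : (0:ℝ) < 1)).const_mul C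
    simpa using this
  refine hg.mono ?_ ?_
  · exact ((continuous_pow k).mul (((continuous_pow 4).neg.add
      ((continuous_const.mul (continuous_pow 2)))).rexp)).aestronglyMeasurable
  · filter_upwards with x
    rw [norm_mul, norm_pow]
    calc ‖x‖^k * ‖Real.exp (-x^4+t*x^2)‖ = |x|^k * Real.exp (-x^4+t*x^2) := by
          rw [Real.norm_eq_abs, Real.norm_eq_abs, abs_of_pos (exp_pos _)]
      _ ≤ C * Real.exp (-x^2) := hC x
      _ ≤ ‖C * Real.exp (-x^2)‖ := le_abs_self _

lemma integrable_poly_w (t : ℝ) (q : Polynomial ℝ) :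
    Integrable (fun x : ℝ => q.eval x * Real.exp (-x^4 + t*x^2)) := by
  have : (fun x : ℝ => q.eval x * Real.exp (-x^4 + t*x^2)) =
      fun x => ∑ k ∈ Finset.range (q.natDegree + 1), q.coeff k * (x^k * Real.exp (-x^4+t*x^2)) := by
    funext x
    rw [Polynomial.eval_eq_sum_range, Finset.sum_mul]
    congr 1; funext k; ring
  rw [this]
  exact integrable_finset_sum _ (fun k _ => (integrable_mono_w t k).const_mul _)

lemma poly_w_bound (t : ℝ) (q : Polynomial ℝ) : ∃ C : ℝ, ∀ x : ℝ,
    |q.eval x| * Real.exp (-x^4 + t*x^2) ≤ C * Real.exp (-x^2) := by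
  choose C hC0 hC using mono_bound t
  refine ⟨∑ k ∈ Finset.range (q.natDegree + 1), |q.coeff k| * C k, fun x => ?_⟩
  have h1 : |q.eval x| ≤ ∑ k ∈ Finset.range (q.natDegree + 1), |q.coeff k| * |x|^k := by
    rw [Polynomial.eval_eq_sum_range]
    refine (Finset.abs_sum_le_sum_abs _ _).trans ?_
    apply Finset.sum_le_sum
    intro k _
    rw [abs_mul, abs_pow]
  calc |q.eval x| * Real.exp (-x^4+t*x^2)
      ≤ (∑ k ∈ Finset.range (q.natDegree + 1), |q.coeff k| * |x|^k) * Real.exp (-x^4+t*x^2) :=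
        mul_le_mul_of_nonneg_right h1 (le_of_lt (exp_pos _))
    _ = ∑ k ∈ Finset.range (q.natDegree + 1), |q.coeff k| * (|x|^k * Real.exp (-x^4+t*x^2)) := by
        rw [Finset.sum_mul]; congr 1; funext k; ring
    _ ≤ ∑ k ∈ Finset.range (q.natDegree + 1), |q.coeff k| * (C k * Real.exp (-x^2)) := by
        refine Finset.sum_le_sum (fun k _ => mul_le_mul_of_nonneg_left (hC k x) (abs_nonneg _))
    _ = (∑ k ∈ Finset.range (q.natDegree + 1), |q.coeff k| * C k) * Real.exp (-x^2) := by
        rw [Finset.sum_mul]; congr 1; funext k; ring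

lemma tendsto_exp_negsq : Tendsto (fun x : ℝ => Real.exp (-x^2)) (atTop ⊔ atBot) (nhds 0) := by
  have hsq : Tendsto (fun x : ℝ => x^2) (atTop ⊔ atBot) atTop := by
    rw [tendsto_sup]
    refine ⟨tendsto_pow_atTop (by norm_num), ?_⟩
    have h2 : Tendsto (fun x : ℝ => (-x)^2) atBot atTop :=
      (tendsto_pow_atTop (by norm_num)).comp tendsto_neg_atBot_atTop
    refine h2.congr (fun x => by ring)
  exact Real.tendsto_exp_atBot.comp (tendsto_neg_atTop_atBot.comp hsq)

lemma tendsto_poly_w (t : ℝ) (q : Polynomial ℝ) :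
    Tendsto (fun x : ℝ => q.eval x * Real.exp (-x^4 + t*x^2)) (atTop ⊔ atBot) (nhds 0) := by
  obtain ⟨C, hC⟩ := poly_w_bound t q
  have hb : Tendsto (fun x : ℝ => C * Real.exp (-x^2)) (atTop ⊔ atBot) (nhds 0) := by
    simpa using tendsto_exp_negsq.const_mul C
  apply squeeze_zero_norm _ hb
  intro x
  rw [Real.norm_eq_abs, abs_mul, abs_of_pos (exp_pos _)]
  exact hC x

lemma pearson (t : ℝ) (q : Polynomial ℝ) :
    ∫ x : ℝ, (derivative q + q * (Polynomial.C (2*t) * Polynomial.X - Polynomial.C 4 * Polynomial.X^3)).eval x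
      * Real.exp (-x^4 + t*x^2) = 0 := by
  have hint : ∀ r : Polynomial ℝ, Integrable (fun x : ℝ => r.eval x * Real.exp (-x^4 + t*x^2)) :=
    integrable_poly_w t
  set r := derivative q + q * (Polynomial.C (2*t) * Polynomial.X - Polynomial.C 4 * Polynomial.X^3) with hr
  set f : ℝ → ℝ := fun x => q.eval x * Real.exp (-x^4 + t*x^2) with hf
  have hderiv : ∀ x : ℝ, HasDerivAt f (r.eval x * Real.exp (-x^4 + t*x^2)) x := by
    intro x
    have hu : HasDerivAt (fun x : ℝ => -x^4 + t*x^2) (-(4*x^3) + t*(2*x)) x := by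
      exact ((hasDerivAt_pow 4 x).neg.add ((hasDerivAt_pow 2 x).const_mul t)).congr_deriv (by ring_nf)
    have he : HasDerivAt (fun x : ℝ => Real.exp (-x^4 + t*x^2))
        ((-(4*x^3) + t*(2*x)) * Real.exp (-x^4 + t*x^2)) x := by
      simpa [mul_comm] using hu.exp
    have := (q.hasDerivAt x).mul he
    refine this.congr_deriv ?_
    rw [hr]
    simp [Polynomial.eval_mul, Polynomial.eval_add]
    ring
  have hcont : Continuous fun x : ℝ => r.eval x * Real.exp (-x^4 + t*x^2) := by
    exact r.continuous_aeval.mul (((continuous_pow 4).neg.add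
      ((continuous_const.mul (continuous_pow 2)))).rexp)
  have key : Tendsto (fun R : ℝ => ∫ x in (-R)..R, r.eval x * Real.exp (-x^4 + t*x^2))
      atTop (nhds (∫ x : ℝ, r.eval x * Real.exp (-x^4 + t*x^2))) :=
    intervalIntegral_tendsto_integral (hint r) tendsto_neg_atTop_atBot tendsto_id
  have heq : ∀ R : ℝ, ∫ x in (-R)..R, r.eval x * Real.exp (-x^4 + t*x^2) = f R - f (-R) := by
    intro R
    exact intervalIntegral.integral_eq_sub_of_hasDerivAt (fun x _ => hderiv x)
      (hcont.intervalIntegrable _ _)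
  have key2 : Tendsto (fun R : ℝ => f R - f (-R)) atTop (nhds 0) := by
    have h1 : Tendsto f atTop (nhds 0) := (tendsto_poly_w t q).mono_left le_sup_left
    have h2 : Tendsto (fun R : ℝ => f (-R)) atTop (nhds 0) :=
      ((tendsto_poly_w t q).mono_left le_sup_right).comp tendsto_neg_atTop_atBot
    simpa using h1.sub h2
  rw [funext heq] at key
  exact tendsto_nhds_unique key key2

noncomputable def ip (t : ℝ) (q : Polynomial ℝ) : ℝ :=
  ∫ x : ℝ, q.eval x * Real.exp (-x^4 + t*x^2)

lemma ip_add (t : ℝ) (q r : Polynomial ℝ) : ip t (q + r) = ip t q + ip t r := by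
  unfold ip
  rw [← integral_add (integrable_poly_w t q) (integrable_poly_w t r)]
  congr 1; funext x; rw [eval_add]; ring

lemma ip_Cmul (t : ℝ) (c : ℝ) (q : Polynomial ℝ) : ip t (Polynomial.C c * q) = c * ip t q := by
  unfold ip
  rw [← integral_const_mul]
  congr 1; funext x; rw [eval_mul, eval_C]; ring

lemma ip_sum (t : ℝ) (s : Finset ℕ) (g : ℕ → Polynomial ℝ) :
    ip t (∑ k ∈ s, g k) = ∑ k ∈ s, ip t (g k) := by
  classical
  induction s using Finset.induction with
  | empty => simp [ip]
  | insert _ _ h ih => rw [Finset.sum_insert h, Finset.sum_insert h, ip_add, ih]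

section OPS
variable (t : ℝ) (P : ℕ → Polynomial ℝ)
  (hmonic : ∀ n, (P n).Monic) (hdeg : ∀ n, (P n).natDegree = n)

include hmonic hdeg in
lemma span_P : ∀ m : ℕ, ∀ q : Polynomial ℝ, q.natDegree ≤ m →
    ∃ c : ℕ → ℝ, q = ∑ k ∈ Finset.range (m+1), Polynomial.C (c k) * P k := by
  intro m
  induction m with
  | zero =>
    intro q hq
    have hP0 : P 0 = 1 := by
      have h1 := Polynomial.eq_C_of_natDegree_le_zero (le_of_eq (hdeg 0))
      have h2 := (hmonic 0).leadingCoeff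
      rw [Polynomial.leadingCoeff, hdeg 0] at h2
      rw [h1, h2, map_one]
    refine ⟨fun _ => q.coeff 0, ?_⟩
    rw [Finset.sum_range_one, hP0, mul_one]
    exact Polynomial.eq_C_of_natDegree_le_zero hq
  | succ m ih =>
    intro q hq
    set q' := q - Polynomial.C (q.coeff (m+1)) * P (m+1) with hq'
    have hdeg' : q'.natDegree ≤ m := by
      apply Polynomial.natDegree_le_iff_coeff_eq_zero.mpr
      intro i hi
      rw [hq', Polynomial.coeff_sub, Polynomial.coeff_C_mul]
      rcases eq_or_lt_of_le (Nat.succ_le_of_lt hi) with h | h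
      · subst h
        have : (P (m+1)).coeff (m+1) = 1 := by
          have := (hmonic (m+1)).leadingCoeff
          rwa [Polynomial.leadingCoeff, hdeg (m+1)] at this
        rw [this, mul_one, sub_self]
      · have h1 : q.coeff i = 0 := Polynomial.coeff_eq_zero_of_natDegree_lt (by omega)
        have h2 : (P (m+1)).coeff i = 0 := Polynomial.coeff_eq_zero_of_natDegree_lt (by rw [hdeg]; omega)
        rw [h1, h2, mul_zero, sub_zero]
    obtain ⟨c, hc⟩ := ih q' hdeg'
    refine ⟨fun k => if k = m+1 then q.coeff (m+1) else c k, ?_⟩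
    rw [Finset.sum_range_succ]
    have : ∀ k ∈ Finset.range (m+1), Polynomial.C (if k = m+1 then q.coeff (m+1) else c k) * P k
        = Polynomial.C (c k) * P k := by
      intro k hk
      rw [Finset.mem_range] at hk
      rw [if_neg (by omega)]
    rw [Finset.sum_congr rfl this, ← hc]
    simp only [hq', if_pos]
    ring
end OPS


lemma ip_sq_pos (t : ℝ) (q : Polynomial ℝ) (hq : q ≠ 0) : 0 < ip t (q * q) := by
  unfold ip
  have hnn : (0:ℝ → ℝ) ≤ fun x => (q*q).eval x * Real.exp (-x^4 + t*x^2) := by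
    intro x
    simp only [Pi.zero_apply, eval_mul]
    have := exp_pos (-x^4 + t*x^2)
    nlinarith [sq_nonneg (q.eval x)]
  rw [integral_pos_iff_support_of_nonneg hnn (integrable_poly_w t (q*q))]
  have hsub : {x : ℝ | q.IsRoot x}ᶜ ⊆ Function.support fun x => (q*q).eval x * Real.exp (-x^4+t*x^2) := by
    intro x hx
    simp only [Set.mem_compl_iff, Set.mem_setOf_eq, IsRoot] at hx
    simp only [Function.mem_support, eval_mul]
    intro h
    rcases mul_eq_zero.1 h with h | h
    · exact hx (by rcases mul_eq_zero.1 h with h|h <;> exact h)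
    · exact absurd h (ne_of_gt (exp_pos _))
  have hroots : volume {x : ℝ | q.IsRoot x} = 0 := (Polynomial.finite_setOf_isRoot hq).measure_zero _
  have : volume {x : ℝ | q.IsRoot x}ᶜ = ⊤ := by
    have := measure_add_measure_compl (μ := volume) (s := {x : ℝ | q.IsRoot x})
      (Polynomial.finite_setOf_isRoot hq).measurableSet
    rw [hroots, zero_add] at this
    rw [this]; exact Real.volume_univ
  calc (0:ENNReal) < ⊤ := by simp
    _ = volume {x : ℝ | q.IsRoot x}ᶜ := this.symm
    _ ≤ volume (Function.support fun x => (q*q).eval x * Real.exp (-x^4+t*x^2)) :=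
        measure_mono hsub

lemma integral_comp_neg_real (f : ℝ → ℝ) : ∫ x : ℝ, f (-x) = ∫ x : ℝ, f x :=
  (Measure.measurePreserving_neg volume).integral_comp
    (MeasurableEquiv.neg ℝ).measurableEmbedding f


lemma ip_sub (t : ℝ) (q r : Polynomial ℝ) : ip t (q - r) = ip t q - ip t r := by
  have h := ip_add t (q - r) r
  simp only [sub_add_cancel] at h
  linarith

lemma ip_zero (t : ℝ) : ip t 0 = 0 := by
  have := ip_sub t 0 0; simpa using this

lemma ip_lower (t : ℝ) (P : ℕ → Polynomial ℝ)
    (hmonic : ∀ n, (P n).Monic) (hdeg : ∀ n, (P n).natDegree = n)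
    (horthip : ∀ j k, j ≠ k → ip t (P j * P k) = 0) :
    ∀ n : ℕ, ∀ q : Polynomial ℝ, q.natDegree < n → ip t (P n * q) = 0 := by
  intro n q hq
  rcases eq_or_ne q 0 with rfl | hq0
  · rw [mul_zero, ip_zero]
  obtain ⟨c, hc⟩ := span_P P hmonic hdeg (n - 1) q (by omega)
  rw [hc, Finset.mul_sum, ip_sum]
  apply Finset.sum_eq_zero
  intro k hk
  rw [Finset.mem_range] at hk
  have : P n * (Polynomial.C (c k) * P k) = Polynomial.C (c k) * (P n * P k) := by ring
  rw [this, ip_Cmul, horthip n k (by omega), mul_zero]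

lemma coeff_extract (t : ℝ) (P : ℕ → Polynomial ℝ)
    (horthip : ∀ j k, j ≠ k → ip t (P j * P k) = 0)
    (m : ℕ) (c : ℕ → ℝ) (q : Polynomial ℝ)
    (hq : q = ∑ k ∈ Finset.range m, Polynomial.C (c k) * P k)
    (j : ℕ) (hj : j < m) : ip t (P j * q) = c j * ip t (P j * P j) := by
  rw [hq, Finset.mul_sum, ip_sum]
  rw [Finset.sum_eq_single j]
  · rw [show P j * (Polynomial.C (c j) * P j) = Polynomial.C (c j) * (P j * P j) by ring, ip_Cmul]
  · intro k _ hk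
    rw [show P j * (Polynomial.C (c k) * P k) = Polynomial.C (c k) * (P j * P k) by ring, ip_Cmul,
      horthip j k (Ne.symm hk), mul_zero]
  · intro h
    exact absurd (Finset.mem_range.2 hj) h

lemma unique_OP (t : ℝ) (P : ℕ → Polynomial ℝ)
    (hmonic : ∀ n, (P n).Monic) (hdeg : ∀ n, (P n).natDegree = n)
    (horthip : ∀ j k, j ≠ k → ip t (P j * P k) = 0)
    (n : ℕ) (r : Polynomial ℝ) (hrm : r.Monic) (hrd : r.natDegree = n)
    (hro : ∀ q : Polynomial ℝ, q.natDegree < n → ip t (r * q) = 0) :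
    r = P n := by
  set d := r - P n with hd
  rcases eq_or_ne d 0 with h0 | h0
  · have : r = P n := by rwa [sub_eq_zero] at h0
    exact this
  exfalso
  have hdd : d.natDegree < n := by
    rcases Nat.eq_zero_or_pos n with rfl | hn
    · exfalso
      apply h0
      have h1 : r = 1 := Polynomial.Monic.natDegree_eq_zero hrm |>.1 hrd
      have h2 : P 0 = 1 := Polynomial.Monic.natDegree_eq_zero (hmonic 0) |>.1 (hdeg 0)
      rw [hd, h1, h2, sub_self]
    have : d.natDegree ≤ n - 1 := by
      apply Polynomial.natDegree_le_iff_coeff_eq_zero.mpr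
      intro i hi
      rw [hd, Polynomial.coeff_sub]
      have hni : n ≤ i := by omega
      rcases eq_or_lt_of_le hni with h | h
      · have e1 : r.coeff i = 1 := by
          rw [← h]; have := hrm.leadingCoeff; rwa [Polynomial.leadingCoeff, hrd] at this
        have e2 : (P n).coeff i = 1 := by
          rw [← h]; have := (hmonic n).leadingCoeff; rwa [Polynomial.leadingCoeff, hdeg n] at this
        rw [e1, e2, sub_self]
      · rw [Polynomial.coeff_eq_zero_of_natDegree_lt (by rw [hrd]; omega),
          Polynomial.coeff_eq_zero_of_natDegree_lt (by rw [hdeg]; omega), sub_self]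
    omega
  have h1 : ip t (d * d) = 0 := by
    have e1 : ip t (r * d) = 0 := hro d hdd
    have e2 : ip t (P n * d) = 0 := ip_lower t P hmonic hdeg horthip n d hdd
    have : d * d = r * d - P n * d := by rw [hd]; ring
    rw [this, ip_sub, e1, e2, sub_zero]
  exact absurd h1 (ne_of_gt (ip_sq_pos t d h0))

lemma parity (t : ℝ) (P : ℕ → Polynomial ℝ)
    (hmonic : ∀ n, (P n).Monic) (hdeg : ∀ n, (P n).natDegree = n)
    (horthip : ∀ j k, j ≠ k → ip t (P j * P k) = 0) :
    ∀ n, (P n).comp (-Polynomial.X) = Polynomial.C ((-1 : ℝ)^n) * P n := by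
  have hXdeg : (-Polynomial.X : ℝ[X]).natDegree = 1 := by simp
  have hXlc : (-Polynomial.X : ℝ[X]).leadingCoeff = -1 := by simp
  set Q : ℕ → Polynomial ℝ := fun n => Polynomial.C ((-1 : ℝ)^n) * (P n).comp (-Polynomial.X)
    with hQ
  have hcomplc : ∀ n, ((P n).comp (-Polynomial.X)).leadingCoeff = (-1:ℝ)^n := by
    intro n
    rw [Polynomial.leadingCoeff_comp (by rw [hXdeg]; norm_num), hXlc, (hmonic n).leadingCoeff,
      hdeg n, one_mul]
  have hcompne : ∀ n, (P n).comp (-Polynomial.X) ≠ 0 := by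
    intro n h
    have := hcomplc n
    rw [h] at this
    simp only [Polynomial.leadingCoeff_zero] at this
    have : ((-1:ℝ)^n)^2 = 0 := by rw [← this]; ring
    simp at this
  have hQdeg : ∀ n, (Q n).natDegree = n := by
    intro n
    rw [hQ]
    simp only []
    rw [Polynomial.natDegree_C_mul (by positivity), Polynomial.natDegree_comp, hXdeg, hdeg, mul_one]
  have hQmonic : ∀ n, (Q n).Monic := by
    intro n
    unfold Polynomial.Monic
    rw [hQ]
    simp only []
    rw [Polynomial.leadingCoeff_mul, Polynomial.leadingCoeff_C, hcomplc]
    rw [← pow_add, ← two_mul, pow_mul]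
    norm_num
  have hQeval : ∀ n (x : ℝ), (Q n).eval x = (-1:ℝ)^n * (P n).eval (-x) := by
    intro n x
    rw [hQ]
    simp [Polynomial.eval_comp]
  have hQorthip : ∀ j k, j ≠ k → ip t (Q j * Q k) = 0 := by
    intro j k hjk
    have key : ip t (Q j * Q k) = ((-1:ℝ)^(j+k)) * ip t (P j * P k) := by
      unfold ip
      calc ∫ x : ℝ, (Q j * Q k).eval x * Real.exp (-x^4 + t*x^2)
          = ∫ x : ℝ, (-1:ℝ)^(j+k) *
              ((P j * P k).eval (-x) * Real.exp (-(-x)^4 + t*(-x)^2)) := by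
            congr 1
            funext x
            rw [Polynomial.eval_mul, hQeval, hQeval, Polynomial.eval_mul]
            have h4 : (-x:ℝ)^4 = x^4 := by ring
            have h2 : (-x:ℝ)^2 = x^2 := by ring
            rw [h4, h2, pow_add]
            ring
        _ = (-1:ℝ)^(j+k) *
              ∫ x : ℝ, (P j * P k).eval (-x) * Real.exp (-(-x)^4 + t*(-x)^2) :=
            integral_const_mul _ _
        _ = ((-1:ℝ)^(j+k)) * ∫ x : ℝ, (P j * P k).eval x * Real.exp (-x^4 + t*x^2) := by
            rw [integral_comp_neg_real (fun x => (P j * P k).eval x * Real.exp (-x^4 + t*x^2))]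
    rw [key, horthip j k hjk, mul_zero]
  have hfin : ∀ n, Q n = P n := by
    intro n
    apply unique_OP t P hmonic hdeg horthip n (Q n) (hQmonic n) (hQdeg n)
    exact ip_lower t Q hQmonic hQdeg hQorthip n
  intro n
  have h := hfin n
  rw [hQ] at h
  simp only [] at h
  calc (P n).comp (-Polynomial.X)
      = Polynomial.C ((-1:ℝ)^n) * (Polynomial.C ((-1:ℝ)^n) * (P n).comp (-Polynomial.X)) := by
        rw [← mul_assoc, ← Polynomial.C_mul, ← pow_add, ← two_mul, pow_mul]
        norm_num
    _ = Polynomial.C ((-1:ℝ)^n) * P n := by rw [h]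

lemma ip_odd (t : ℝ) (q : Polynomial ℝ) (hq : q.comp (-Polynomial.X) = -q) : ip t q = 0 := by
  unfold ip
  have key := integral_comp_neg_real (fun x => q.eval x * Real.exp (-x^4 + t*x^2))
  have heq : ∀ x : ℝ, q.eval (-x) * Real.exp (-(-x)^4 + t*(-x)^2)
      = -(q.eval x * Real.exp (-x^4 + t*x^2)) := by
    intro x
    have h1 : q.eval (-x) = (q.comp (-Polynomial.X)).eval x := by
      rw [Polynomial.eval_comp]; simp
    rw [h1, hq]
    have h4 : (-x:ℝ)^4 = x^4 := by ring
    have h2 : (-x:ℝ)^2 = x^2 := by ring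
    rw [h4, h2]
    simp
  simp only [heq] at key
  rw [integral_neg] at key
  linarith


section Rec
variable (t : ℝ) (P : ℕ → Polynomial ℝ)
  (hmonic : ∀ n, (P n).Monic) (hdeg : ∀ n, (P n).natDegree = n)
  (horthip : ∀ j k, j ≠ k → ip t (P j * P k) = 0)

include hmonic hdeg horthip in
lemma rec_exists :
    ∃ β : ℕ → ℝ, β 0 = 0 ∧
      ∀ n, Polynomial.X * P n = P (n+1) + Polynomial.C (β n) * P (n - 1) := by
  have hPn0 : ∀ n, P n ≠ 0 := fun n => (hmonic n).ne_zero
  have hlead : ∀ n, (P n).coeff n = 1 := by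
    intro n
    have := (hmonic n).leadingCoeff
    rwa [Polynomial.leadingCoeff, hdeg n] at this
  -- the expansion for each n
  have main : ∀ n : ℕ, ∃ b : ℝ, (n = 0 → b = 0) ∧
      Polynomial.X * P n = P (n+1) + Polynomial.C b * P (n - 1) := by
    intro n
    set q : Polynomial ℝ := Polynomial.X * P n - P (n+1) with hq
    have hqdeg : q.natDegree ≤ n := by
      apply Polynomial.natDegree_le_iff_coeff_eq_zero.mpr
      intro i hi
      obtain ⟨i, rfl⟩ : ∃ j, i = j + 1 := ⟨i - 1, by omega⟩
      rw [hq, Polynomial.coeff_sub, Polynomial.coeff_X_mul]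
      rcases eq_or_lt_of_le (by omega : n ≤ i) with h | h
      · subst h
        rw [hlead, hlead, sub_self]
      · rw [Polynomial.coeff_eq_zero_of_natDegree_lt (by rw [hdeg]; omega),
          Polynomial.coeff_eq_zero_of_natDegree_lt (by rw [hdeg]; omega), sub_self]
    obtain ⟨c, hc⟩ := span_P P hmonic hdeg n q hqdeg
    -- coefficients vanish except k = n-1
    have hzero : ∀ k, k < n + 1 → (k = n ∨ k + 1 < n) → c k = 0 := by
      intro k hk hcase
      have hext := coeff_extract t P horthip (n+1) c q hc k hk
      have hqip : ip t (P k * q) = ip t (P k * (Polynomial.X * P n)) := by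
        rw [hq, mul_sub, ip_sub, horthip k (n+1) (by omega), sub_zero]
      have hxz : ip t (P k * (Polynomial.X * P n)) = 0 := by
        rcases hcase with rfl | hlt
        · -- odd case
          apply ip_odd
          have hpar := parity t P hmonic hdeg horthip k
          rw [Polynomial.mul_comp, Polynomial.mul_comp, hpar, Polynomial.X_comp]
          have h1 : ((-1:ℝ)^k)^2 = 1 := by
            rw [← pow_mul, mul_comm, pow_mul]; norm_num
          have h2 : Polynomial.C ((-1:ℝ)^k) * P k *
                (-Polynomial.X * (Polynomial.C ((-1:ℝ)^k) * P k))
              = -(Polynomial.C (((-1:ℝ)^k)^2) * (P k * (Polynomial.X * P k))) := by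
            simp only [map_pow]; ring
          rw [h2, h1, map_one, one_mul]
        · have : P k * (Polynomial.X * P n) = P n * (Polynomial.X * P k) := by ring
          rw [this]
          apply ip_lower t P hmonic hdeg horthip
          calc (Polynomial.X * P k).natDegree ≤ 1 + k := by
                apply Polynomial.natDegree_mul_le.trans
                simp [hdeg]
            _ < n := by omega
      have hpos := ip_sq_pos t (P k) (hPn0 k)
      rw [hqip, hxz] at hext
      rcases mul_eq_zero.1 hext.symm with h | h
      · exact h
      · exact absurd h (ne_of_gt hpos)
    refine ⟨c (n-1), ?_, ?_⟩
    · intro hn0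
      subst hn0
      exact hzero 0 (by omega) (Or.inl rfl)
    · rcases Nat.eq_zero_or_pos n with rfl | hn
      · have hc0 : c 0 = 0 := hzero 0 (by omega) (Or.inl rfl)
        have : q = Polynomial.C (c 0) * P 0 := by
          rw [hc, Finset.sum_range_one]
        rw [hq] at this
        have heq : Polynomial.X * P 0 = P 1 + Polynomial.C (c 0) * P 0 := by
          rw [← this]; ring
        simpa using heq
      · have hsum : q = Polynomial.C (c (n-1)) * P (n-1) := by
          rw [hc]
          rw [Finset.sum_eq_single (n-1)]
          · intro k hk hne
            rw [Finset.mem_range] at hk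
            have : c k = 0 := hzero k hk (by omega)
            rw [this, map_zero, zero_mul]
          · intro h
            exact absurd (Finset.mem_range.2 (by omega)) h
        rw [hq] at hsum
        rw [← hsum]; ring
  choose β hβ0 hβ using main
  exact ⟨β, hβ0 0 rfl, hβ⟩
end Rec
lemma pearson' (t : ℝ) (q : Polynomial ℝ) :
    ip t (Polynomial.derivative q
      + q * (Polynomial.C (2*t) * Polynomial.X - Polynomial.C 4 * Polynomial.X^3)) = 0 := by
  unfold ip
  exact pearson t q


section Str
variable (t : ℝ) (P : ℕ → Polynomial ℝ) (β : ℕ → ℝ)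
  (hmonic : ∀ n, (P n).Monic) (hdeg : ∀ n, (P n).natDegree = n)
  (horthip : ∀ j k, j ≠ k → ip t (P j * P k) = 0)
  (hβ0 : β 0 = 0)
  (hrec : ∀ n, Polynomial.X * P n = P (n+1) + Polynomial.C (β n) * P (n - 1))

include hmonic hdeg horthip hrec in
lemma norm_rec : ∀ n, ip t (P (n+1) * P (n+1)) = β (n+1) * ip t (P n * P n) := by
  intro n
  have key : P (n+1) * (Polynomial.X * P n) = P n * (Polynomial.X * P (n+1)) := by ring
  have e1 : P (n+1) * (Polynomial.X * P n)
      = P (n+1) * P (n+1) + Polynomial.C (β n) * (P (n+1) * P (n - 1)) := by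
    rw [hrec n]; ring
  have e2 : P n * (Polynomial.X * P (n+1))
      = P n * P (n+2) + Polynomial.C (β (n+1)) * (P n * P n) := by
    rw [hrec (n+1)]
    norm_num
    ring
  have c1 : ip t (P (n+1) * (Polynomial.X * P n)) = ip t (P (n+1) * P (n+1)) := by
    rw [e1, ip_add, ip_Cmul, horthip (n+1) (n-1) (by omega), mul_zero, add_zero]
  have c2 : ip t (P n * (Polynomial.X * P (n+1))) = β (n+1) * ip t (P n * P n) := by
    rw [e2, ip_add, ip_Cmul, horthip n (n+2) (by omega), zero_add]
  rw [← c1, key, c2]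

include hmonic hdeg horthip hβ0 hrec in
lemma string_eq : ∀ m : ℕ,
    ((m:ℝ) + 1) = 4*(β (m+2) * β (m+1) + β (m+1)^2 + β (m+1) * β m) - 2*t*β (m+1) := by
  intro m
  have hh := norm_rec t P β hmonic hdeg horthip hrec
  have hpos : 0 < ip t (P m * P m) := ip_sq_pos t (P m) (hmonic m).ne_zero
  set q : Polynomial ℝ := P (m+1) * P m with hq
  -- derivative part
  have d1 : ip t (P (m+1) * Polynomial.derivative (P m)) = 0 := by
    apply ip_lower t P hmonic hdeg horthip
    calc (Polynomial.derivative (P m)).natDegree ≤ (P m).natDegree - 1 :=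
          Polynomial.natDegree_derivative_le _
      _ < m + 1 := by rw [hdeg]; omega
  have d2 : ip t (Polynomial.derivative (P (m+1)) * P m) = ((m:ℝ)+1) * ip t (P m * P m) := by
    set s : Polynomial ℝ := Polynomial.derivative (P (m+1)) - Polynomial.C ((m:ℝ)+1) * P m
      with hs
    have hips : ip t (P m * s) = 0 := by
      rcases Nat.eq_zero_or_pos m with rfl | hm
      · have hP1 : P 1 = Polynomial.X + Polynomial.C ((P 1).coeff 0) := by
          have := (hmonic 1).eq_X_add_C (hdeg 1)
          exact this
        have hP0 : P 0 = 1 :=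
          Polynomial.Monic.natDegree_eq_zero (hmonic 0) |>.1 (hdeg 0)
        have : s = 0 := by
          rw [hs, hP1, hP0]
          simp
        rw [this, mul_zero, ip_zero]
      · apply ip_lower t P hmonic hdeg horthip
        have : s.natDegree ≤ m - 1 := by
          apply Polynomial.natDegree_le_iff_coeff_eq_zero.mpr
          intro i hi
          rw [hs, Polynomial.coeff_sub, Polynomial.coeff_derivative, Polynomial.coeff_C_mul]
          have hlead : ∀ n, (P n).coeff n = 1 := by
            intro n
            have := (hmonic n).leadingCoeff
            rwa [Polynomial.leadingCoeff, hdeg n] at this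
          rcases eq_or_lt_of_le (by omega : m ≤ i) with rfl | hgt
          · rw [hlead, hlead]
            push_cast
            ring
          · rw [Polynomial.coeff_eq_zero_of_natDegree_lt (by rw [hdeg]; omega),
              Polynomial.coeff_eq_zero_of_natDegree_lt (by rw [hdeg]; omega)]
            ring
        omega
    have hsplit : Polynomial.derivative (P (m+1)) * P m
        = Polynomial.C ((m:ℝ)+1) * (P m * P m) + P m * s := by
      rw [hs]; ring
    rw [hsplit, ip_add, ip_Cmul, hips, add_zero]
  have ddq : ip t (Polynomial.derivative q) = ((m:ℝ)+1) * ip t (P m * P m) := by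
    rw [hq, Polynomial.derivative_mul, ip_add, d1, d2, add_zero]
  -- X * q
  have e2 : ip t (Polynomial.X * q) = β (m+1) * ip t (P m * P m) := by
    have : Polynomial.X * q = P m * P (m+2) + Polynomial.C (β (m+1)) * (P m * P m) := by
      rw [hq, show Polynomial.X * (P (m+1) * P m) = P m * (Polynomial.X * P (m+1)) by ring,
        hrec (m+1)]
      norm_num
      ring
    rw [this, ip_add, ip_Cmul, horthip m (m+2) (by omega), zero_add]
  -- X^3 * q
  have e3 : ip t (Polynomial.X^3 * q)
      = β (m+2) * β (m+1) * ip t (P m * P m) + β (m+1)^2 * ip t (P m * P m) + β (m+1) * β m * ip t (P m * P m) := by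
    have hAA : ip t ((Polynomial.X * P (m+1)) * (Polynomial.X * P (m+1)))
        = β (m+2) * β (m+1) * ip t (P m * P m) + β (m+1)^2 * ip t (P m * P m) := by
      have expand : (Polynomial.X * P (m+1)) * (Polynomial.X * P (m+1))
          = P (m+2) * P (m+2) + Polynomial.C (β (m+1)) * (P (m+2) * P m)
            + Polynomial.C (β (m+1)) * (P m * P (m+2))
            + Polynomial.C (β (m+1) * β (m+1)) * (P m * P m) := by
        rw [hrec (m+1)]
        simp only [map_mul]
        norm_num
        ring
      rw [expand, ip_add, ip_add, ip_add, ip_Cmul, ip_Cmul, ip_Cmul,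
        horthip (m+2) m (by omega), horthip m (m+2) (by omega)]
      have a := hh (m+1)
      have b := hh m
      rw [show m+1+1 = m+2 from rfl] at a
      rw [a, b]
      ring
    have cJ : β m * ip t ((Polynomial.X * P (m+1)) * (Polynomial.X * P (m-1)))
        = β m * (β (m+1) * ip t (P m * P m)) := by
      rcases Nat.eq_zero_or_pos m with rfl | hm
      · rw [hβ0, zero_mul, zero_mul]
      · obtain ⟨k, rfl⟩ : ∃ k, m = k + 1 := ⟨m - 1, by omega⟩
        congr 1
        have expand : (Polynomial.X * P (k+2)) * (Polynomial.X * P (k+1-1))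
            = P (k+3) * P (k+1) + Polynomial.C (β k) * (P (k+3) * P (k-1))
              + Polynomial.C (β (k+2)) * (P (k+1) * P (k+1))
              + Polynomial.C (β (k+2) * β k) * (P (k+1) * P (k-1)) := by
          rw [show k+1-1 = k from rfl, hrec (k+2), hrec k]
          simp only [map_mul]
          norm_num
          ring
        rw [expand, ip_add, ip_add, ip_add, ip_Cmul, ip_Cmul, ip_Cmul,
          horthip (k+3) (k+1) (by omega), horthip (k+3) (k-1) (by omega),
          horthip (k+1) (k-1) (by omega)]
        ring
    have hX3 : Polynomial.X^3 * q
        = (Polynomial.X * P (m+1)) * (Polynomial.X * P (m+1))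
          + Polynomial.C (β m) * ((Polynomial.X * P (m+1)) * (Polynomial.X * P (m-1))) := by
      have : Polynomial.X^3 * q = (Polynomial.X * P (m+1)) * (Polynomial.X * (Polynomial.X * P m)) := by
        rw [hq]; ring
      rw [this, hrec m, mul_add]
      ring
    rw [hX3, ip_add, ip_Cmul, cJ, hAA]
    ring
  -- Pearson
  have hpe := pearson' t q
  have hsplit : Polynomial.derivative q
        + q * (Polynomial.C (2*t) * Polynomial.X - Polynomial.C 4 * Polynomial.X^3)
      = Polynomial.derivative q + (Polynomial.C (2*t) * (Polynomial.X * q)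
        - Polynomial.C 4 * (Polynomial.X^3 * q)) := by ring
  rw [hsplit, ip_add, ip_sub, ip_Cmul, ip_Cmul, ddq, e2, e3] at hpe
  have key : ((m:ℝ) + 1 - (4*(β (m+2) * β (m+1) + β (m+1)^2 + β (m+1) * β m)
      - 2*t*β (m+1))) * ip t (P m * P m) = 0 := by linear_combination hpe
  rcases mul_eq_zero.1 key with hk | hk
  · linarith
  · exact absurd hk (ne_of_gt hpos)
end Str

lemma alg_main (t : ℝ) (p : ℕ → ℝ) (hp0 : p 0 = 0) (hp1 : p 1 = 0)
    (hstr : ∀ m : ℕ, ((m:ℝ)+1) =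
      4*((p (m+2) - p (m+3))*(p (m+1) - p (m+2)) + (p (m+1) - p (m+2))^2
        + (p (m+1) - p (m+2))*(p m - p (m+1))) - 2*t*(p (m+1) - p (m+2))) :
    ∀ m : ℕ,
      (p m - p (m+2)) *
          (((m:ℝ)+1) + 2 * t * (p (m+1) - p (m+2)) - 4 * (p m - p (m+1)) * (p (m+1) - p (m+2)))
        + p (m+1) + p (m+2) - 2 * t * (p (m+1) - p (m+2)) ^ 2 = 0 := by
  have G : ∀ m : ℕ, 4*(p (m+1) - p (m+2))*(p (m+1) - p (m+3))*(p m - p (m+2))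
      - 2*t*(p (m+1) - p (m+2))^2 - (p (m+1) - p (m+2)) = -2 * p (m+1) := by
    intro m
    induction m with
    | zero =>
      have h := hstr 0
      rw [hp0, hp1] at h ⊢
      norm_num at h ⊢
      linear_combination (p 2) * h
    | succ m ih =>
      have h1 := hstr (m+1)
      have h2 := hstr m
      push_cast at h1 h2 ⊢
      linear_combination ih - (p (m+1) - p (m+3)) * h1 + (p (m+1) - p (m+3)) * h2
  intro m
  have hG := G m
  have h2 := hstr m
  linear_combination hG + (p m - p (m+2)) * h2

end Stmt16Aux

theorem stmt16 (t : ℝ) (P : ℕ → Polynomial ℝ)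
    (hmonic : ∀ n, (P n).Monic) (hdeg : ∀ n, (P n).natDegree = n)
    (horth : ∀ j k, j ≠ k →
      ∫ x : ℝ, (P j).eval x * (P k).eval x * Real.exp (-x ^ 4 + t * x ^ 2) = 0)
    (p : ℕ → ℝ) (hp0 : p 0 = 0) (hp1 : p 1 = 0)
    (hp : ∀ n, 2 ≤ n → p n = (P n).coeff (n - 2))
    (n : ℕ) (hn : 1 ≤ n) :
    (p (n - 1) - p (n + 1)) *
        ((n : ℝ) + 2 * t * (p n - p (n + 1)) - 4 * (p (n - 1) - p n) * (p n - p (n + 1)))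
      + p n + p (n + 1) - 2 * t * (p n - p (n + 1)) ^ 2 = 0 := by
  classical
  open Stmt16Aux Polynomial in
  have horthip : ∀ j k, j ≠ k → ip t (P j * P k) = 0 := by
    intro j k hjk
    unfold ip
    have := horth j k hjk
    simpa only [Polynomial.eval_mul] using this
  obtain ⟨β, hβ0, hrec⟩ := Stmt16Aux.rec_exists t P hmonic hdeg horthip
  have hlead : ∀ m, (P m).coeff m = 1 := by
    intro m
    have := (hmonic m).leadingCoeff
    rwa [Polynomial.leadingCoeff, hdeg m] at this
  have hP0 : P 0 = 1 :=
    Polynomial.Monic.natDegree_eq_zero (hmonic 0) |>.1 (hdeg 0)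
  have hb : ∀ k, β k = p k - p (k+1) := by
    intro k
    match k with
    | 0 => rw [hβ0, hp0, hp1]; ring
    | 1 =>
      have h := congrArg (fun q => Polynomial.coeff q 0) (hrec 1)
      simp only [Polynomial.coeff_add, Polynomial.coeff_C_mul, Polynomial.mul_coeff_zero,
        Polynomial.coeff_X_zero, zero_mul, hP0, Polynomial.coeff_one] at h
      rw [hp1, hp 2 (by omega)]
      simp at h
      linarith
    | (j+2) =>
      have h := congrArg (fun q => Polynomial.coeff q (j+1)) (hrec (j+2))
      simp only [Polynomial.coeff_add, Polynomial.coeff_C_mul] at h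
      rw [show ((j:ℕ)+1) = j + 1 from rfl] at h
      rw [Polynomial.coeff_X_mul] at h
      rw [show (j+2) - 1 = j+1 from rfl, hlead (j+1), mul_one] at h
      rw [hp (j+2) (by omega), hp (j+3) (by omega)]
      rw [show (j+2) - 2 = j from rfl, show (j+3) - 2 = j + 1 from rfl]
      have h' : (P (j+2)).coeff j = (P (j+2+1)).coeff (j+1) + β (j+2) := h
      rw [show j+2+1 = j+3 from rfl] at h'
      linarith
  have hstrβ := Stmt16Aux.string_eq t P β hmonic hdeg horthip hβ0 hrec
  have hstr : ∀ m : ℕ, ((m:ℝ)+1) =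
      4*((p (m+2) - p (m+3))*(p (m+1) - p (m+2)) + (p (m+1) - p (m+2))^2
        + (p (m+1) - p (m+2))*(p m - p (m+1))) - 2*t*(p (m+1) - p (m+2)) := by
    intro m
    have h := hstrβ m
    rw [hb (m+2), hb (m+1), hb m] at h
    rw [show m+2+1 = m+3 from rfl, show m+1+1 = m+2 from rfl] at h
    exact h
  obtain ⟨m, rfl⟩ : ∃ m, n = m + 1 := ⟨n - 1, by omega⟩
  have hmain := Stmt16Aux.alg_main t p hp0 hp1 hstr m
  have hcast : ((m+1 : ℕ) : ℝ) = (m:ℝ) + 1 := by push_cast; ring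
  rw [show (m+1) - 1 = m from rfl, show (m+1) + 1 = m + 2 from rfl, hcast]
  convert hmain using 2
end

section
/- For the Freud weight w(x;t) = exp(−x⁶ + t x²) with t ∈ ℝ, the recurrence coefficients satisfy the fourth-order nonlinear difference equation (a member of the discrete Painlevé I hierarchy): for every n ≥ 2, 6 β_n(t)·[β_{n−2}(t)β_{n−1}(t) + β_{n−1}(t)² + 2β_{n−1}(t)β_n(t) + β_{n−1}(t)β_{n+1}(t) + β_n(t)² + 2β_n(t)β_{n+1}(t) + β_{n+1}(t)² + β_{n+1}(t)β_{n+2}(t)] − 2 t β_n(t) = n. -/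
open MeasureTheory Real Polynomial Filter Set Topology

namespace Stmt19

noncomputable def W (t x : ℝ) : ℝ := Real.exp (-x ^ 6 + t * x ^ 2)

lemma W_pos (t x : ℝ) : 0 < W t x := Real.exp_pos _

lemma W_neg (t x : ℝ) : W t (-x) = W t x := by
  unfold W; ring_nf

lemma W_le (t : ℝ) {x : ℝ} (hx : |t| + 2 ≤ x) : W t x ≤ Real.exp (-(2 * x)) := by
  have h1 : (2:ℝ) ≤ x := by have := abs_nonneg t; linarith
  have ht : t ≤ x - 2 := by have := le_abs_self t; linarith
  apply Real.exp_le_exp.2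
  have e1 : x ^ 3 ≤ x ^ 6 := pow_le_pow_right₀ (by linarith) (by norm_num)
  have e2 : x ≤ x ^ 2 := by nlinarith
  have e3 : t * x ^ 2 ≤ (x - 2) * x ^ 2 :=
    mul_le_mul_of_nonneg_right ht (sq_nonneg x)
  nlinarith

lemma poly_mul_W_bound (t : ℝ) (p : ℝ[X]) :
    ∀ᶠ x in atTop, ‖p.eval x * W t x‖ ≤ |p.eval x / Real.exp x| * Real.exp (-x) := by
  filter_upwards [eventually_ge_atTop (|t| + 2), eventually_ge_atTop (0:ℝ)] with x hx hx0
  have hW : W t x ≤ Real.exp (-(2 * x)) := W_le t hx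
  rw [Real.norm_eq_abs, abs_mul, abs_of_pos (W_pos t x)]
  calc |p.eval x| * W t x ≤ |p.eval x| * Real.exp (-(2 * x)) :=
        mul_le_mul_of_nonneg_left hW (abs_nonneg _)
    _ = (|p.eval x| * Real.exp (-x)) * Real.exp (-x) := by
        rw [mul_assoc, ← Real.exp_add]; ring_nf
    _ = |p.eval x / Real.exp x| * Real.exp (-x) := by
        rw [abs_div, abs_of_pos (Real.exp_pos x), div_eq_mul_inv, ← Real.exp_neg]

lemma tendsto_top (t : ℝ) (p : ℝ[X]) :
    Tendsto (fun x => p.eval x * W t x) atTop (𝓝 0) := by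
  refine squeeze_zero_norm' (poly_mul_W_bound t p) ?_
  · have h1 : Tendsto (fun x => |p.eval x / Real.exp x|) atTop (𝓝 0) := by
      simpa using (p.tendsto_div_exp_atTop).abs
    have h2 : Tendsto (fun x : ℝ => Real.exp (-x)) atTop (𝓝 0) :=
      Real.tendsto_exp_neg_atTop_nhds_zero
    simpa using h1.mul h2

lemma tendsto_bot (t : ℝ) (p : ℝ[X]) :
    Tendsto (fun x => p.eval x * W t x) atBot (𝓝 0) := by
  have h := (tendsto_top t (p.comp (-X))).comp tendsto_neg_atBot_atTop
  refine h.congr fun x => ?_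
  simp [Function.comp, eval_comp, W_neg]

lemma continuous_poly_mul_W (t : ℝ) (p : ℝ[X]) :
    Continuous fun x => p.eval x * W t x := by
  have : Continuous fun x : ℝ => W t x := by unfold W; fun_prop
  exact p.continuous.mul this

lemma integrableOn_Ioi_poly (t : ℝ) (p : ℝ[X]) :
    IntegrableOn (fun x => p.eval x * W t x) (Ioi 0) := by
  refine integrable_of_isBigO_exp_neg (b := 1) one_pos
    (continuous_poly_mul_W t p).continuousOn ?_
  have h1 : Tendsto (fun x => |p.eval x / Real.exp x|) atTop (𝓝 0) := by
    simpa using (p.tendsto_div_exp_atTop).abs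
  have h2 : ∀ᶠ x in atTop, |p.eval x / Real.exp x| ≤ 1 :=
    h1.eventually_le_const one_pos
  refine Asymptotics.IsBigO.of_bound 1 ?_
  filter_upwards [poly_mul_W_bound t p, h2] with x hb h1x
  have : (0:ℝ) ≤ Real.exp (-x) := (Real.exp_pos _).le
  calc ‖p.eval x * W t x‖ ≤ |p.eval x / Real.exp x| * Real.exp (-x) := hb
    _ ≤ 1 * Real.exp (-x) := mul_le_mul_of_nonneg_right h1x this
    _ = 1 * ‖Real.exp (-1 * x)‖ := by
        rw [Real.norm_eq_abs, abs_of_pos (Real.exp_pos _), neg_one_mul]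

lemma integrable_poly_mul_W (t : ℝ) (p : ℝ[X]) :
    Integrable (fun x => p.eval x * W t x) := by
  have hIoi := integrableOn_Ioi_poly t p
  have hIic : IntegrableOn (fun x => p.eval x * W t x) (Iic 0) := by
    have A : MeasurableEmbedding fun x : ℝ => -x :=
      (Homeomorph.neg ℝ).isClosedEmbedding.measurableEmbedding
    have : IntegrableOn (fun x => p.eval x * W t x) (Iic 0) (volume : Measure ℝ) ↔
        IntegrableOn ((fun x => p.eval x * W t x) ∘ fun x : ℝ => -x)
          ((fun x : ℝ => -x) ⁻¹' (Iic 0)) (volume : Measure ℝ) := by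
      conv_lhs => rw [← Measure.map_neg_eq_self (volume : Measure ℝ)]
      exact A.integrableOn_map_iff
    rw [this]
    have hpre : ((fun x : ℝ => -x) ⁻¹' (Iic 0)) = Ici 0 := by
      ext x; simp
    rw [hpre]
    have hfun : ((fun x => p.eval x * W t x) ∘ fun x : ℝ => -x)
        = fun x => (p.comp (-X)).eval x * W t x := by
      funext x; simp [Function.comp, eval_comp, W_neg]
    rw [hfun]
    exact (integrableOn_Ici_iff_integrableOn_Ioi (f := fun x => (p.comp (-X)).eval x * W t x)).2 (integrableOn_Ioi_poly t _)
  have := hIic.union hIoi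
  rw [Iic_union_Ioi] at this
  exact integrableOn_univ.mp this


noncomputable def L (t : ℝ) (q : ℝ[X]) : ℝ := ∫ x : ℝ, q.eval x * W t x

lemma L_add (t : ℝ) (p q : ℝ[X]) : L t (p + q) = L t p + L t q := by
  unfold L
  rw [← integral_add (integrable_poly_mul_W t p) (integrable_poly_mul_W t q)]
  congr 1; funext x; simp [eval_add]; ring

lemma L_Csmul (t c : ℝ) (p : ℝ[X]) : L t (C c * p) = c * L t p := by
  unfold L
  rw [← integral_const_mul]
  congr 1; funext x; simp [eval_mul]; ring

lemma L_neg (t : ℝ) (p : ℝ[X]) : L t (-p) = - L t p := by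
  have : (-p : ℝ[X]) = C (-1) * p := by ring_nf; simp [neg_one_mul]
  rw [this, L_Csmul]; ring

lemma L_sub (t : ℝ) (p q : ℝ[X]) : L t (p - q) = L t p - L t q := by
  rw [sub_eq_add_neg, L_add, L_neg]; ring

lemma L_sum (t : ℝ) (s : Finset ℕ) (f : ℕ → ℝ[X]) :
    L t (∑ j ∈ s, f j) = ∑ j ∈ s, L t (f j) := by
  classical
  induction s using Finset.induction_on with
  | empty => simp [L]
  | insert j s hj ih =>
      rw [Finset.sum_insert hj, L_add, ih, Finset.sum_insert hj]

lemma L_comp_neg (t : ℝ) (q : ℝ[X]) : L t (q.comp (-X)) = L t q := by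
  have h : (fun x => (q.comp (-X)).eval x * W t x)
      = fun x => q.eval (-x) * W t (-x) := by
    funext x; rw [eval_comp]; simp [W_neg]
  unfold L
  rw [h]
  exact integral_neg_eq_self (fun x => q.eval x * W t x) volume

lemma L_sq_pos (t : ℝ) {q : ℝ[X]} (hq : q ≠ 0) : 0 < L t (q * q) := by
  unfold L
  rw [integral_pos_iff_support_of_nonneg]
  · have hsub : {x : ℝ | q.eval x ≠ 0} ⊆ Function.support fun x => (q * q).eval x * W t x := by
      intro x hx
      simp only [Function.mem_support, eval_mul]
      exact fun hh => hx (by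
        rcases mul_eq_zero.1 hh with h' | h'
        · rcases mul_eq_zero.1 h' with h'' | h'' <;> exact h''
        · exact absurd h' (W_pos t x).ne')
    refine lt_of_lt_of_le ?_ (measure_mono hsub)
    by_contra hle
    push_neg at hle
    have h0 : volume {x : ℝ | q.eval x ≠ 0} = 0 := le_antisymm hle bot_le
    have hfin : volume {x : ℝ | IsRoot q x} = 0 :=
      (Polynomial.finite_setOf_isRoot hq).measure_zero _
    have huniv : (univ : Set ℝ) ⊆ {x : ℝ | IsRoot q x} ∪ {x : ℝ | q.eval x ≠ 0} := by
      intro x _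
      by_cases hx : q.eval x = 0
      · exact Or.inl hx
      · exact Or.inr hx
    have : volume (univ : Set ℝ) = 0 := by
      refine le_antisymm ?_ bot_le
      calc volume (univ : Set ℝ) ≤ volume ({x : ℝ | IsRoot q x} ∪ {x : ℝ | q.eval x ≠ 0}) :=
            measure_mono huniv
        _ ≤ volume {x : ℝ | IsRoot q x} + volume {x : ℝ | q.eval x ≠ 0} := measure_union_le _ _
        _ = 0 := by rw [h0, hfin]; simp
    rw [Real.volume_univ] at this
    exact ENNReal.top_ne_zero this
  · intro x
    simp only [eval_mul, Pi.zero_apply]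
    exact mul_nonneg (mul_self_nonneg _) (W_pos t x).le
  · exact integrable_poly_mul_W t _

lemma eq_zero_of_L_sq (t : ℝ) {q : ℝ[X]} (hq : L t (q * q) = 0) : q = 0 := by
  by_contra h
  exact (L_sq_pos t h).ne' hq

lemma L_ibp (t : ℝ) (q : ℝ[X]) :
    L t (derivative q + C (-6) * (X ^ 5 * q) + C (2 * t) * (X * q)) = 0 := by
  set r : ℝ[X] := derivative q + C (-6) * (X ^ 5 * q) + C (2 * t) * (X * q) with hr
  have hderiv : ∀ x : ℝ, HasDerivAt (fun x => q.eval x * W t x) (r.eval x * W t x) x := by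
    intro x
    have hq : HasDerivAt (fun x : ℝ => q.eval x) ((derivative q).eval x) x :=
      q.hasDerivAt x
    have hu : HasDerivAt (fun x : ℝ => -x ^ 6 + t * x ^ 2)
        (-(6 * x ^ 5) + t * (2 * x)) x := by
      have h6 : HasDerivAt (fun x : ℝ => x ^ 6) (6 * x ^ 5) x := by
        simpa using hasDerivAt_pow 6 x
      have h2 : HasDerivAt (fun x : ℝ => x ^ 2) (2 * x) x := by
        simpa using hasDerivAt_pow 2 x
      exact h6.neg.add (h2.const_mul t)
    have hW : HasDerivAt (fun x : ℝ => W t x)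
        ((-(6 * x ^ 5) + t * (2 * x)) * W t x) x := by
      have := hu.exp
      simpa [W, mul_comm] using this
    have : HasDerivAt (fun x => q.eval x * W t x) _ x := hq.mul hW
    convert this using 1
    simp only [hr, eval_add, eval_mul, eval_C, eval_pow, eval_X]
    ring
  have h0 : ∫ x : ℝ, r.eval x * W t x = 0 - 0 := by
    exact integral_of_hasDerivAt_of_tendsto hderiv
      (integrable_poly_mul_W t r) (tendsto_bot t q) (tendsto_top t q)
  unfold L
  rw [h0]; ring


lemma L_zero (t : ℝ) : L t 0 = 0 := by simp [L]

section Family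

variable {t : ℝ} {P : ℕ → ℝ[X]}

lemma expand (hmonic : ∀ n, (P n).Monic) (hdeg : ∀ n, (P n).natDegree = n) :
    ∀ k (q : ℝ[X]), q.natDegree ≤ k →
      ∃ c : ℕ → ℝ, q = ∑ j ∈ Finset.range (k + 1), C (c j) * P j := by
  intro k
  induction k with
  | zero =>
    intro q hq
    refine ⟨fun _ => q.coeff 0, ?_⟩
    have hP0 : P 0 = 1 := (hmonic 0).natDegree_eq_zero.1 (hdeg 0)
    rw [Finset.sum_range_one, hP0, mul_one]
    exact eq_C_of_natDegree_le_zero hq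
  | succ k ih =>
    intro q hq
    set r := q - C (q.coeff (k + 1)) * P (k + 1) with hrdef
    have hrdeg : r.natDegree ≤ k := by
      rw [natDegree_le_iff_coeff_eq_zero]
      intro N hN
      have h1 : r.coeff N = q.coeff N - q.coeff (k + 1) * (P (k + 1)).coeff N := by
        simp [hrdef, coeff_C_mul]
      rw [h1]
      rcases eq_or_lt_of_le (Nat.succ_le_of_lt hN) with hNe | hNl
      · have hNe' : N = k + 1 := hNe.symm
        subst hNe'
        have hc1 : (P (k + 1)).coeff (k + 1) = 1 := by
          have h2 := (hmonic (k + 1)).coeff_natDegree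
          rwa [hdeg] at h2
        rw [hc1]; ring
      · have hq1 : q.coeff N = 0 := coeff_eq_zero_of_natDegree_lt (lt_of_le_of_lt hq hNl)
        have hq2 : (P (k + 1)).coeff N = 0 :=
          coeff_eq_zero_of_natDegree_lt (by rw [hdeg]; exact hNl)
        rw [hq1, hq2]; ring
    obtain ⟨c, hc⟩ := ih r hrdeg
    refine ⟨fun j => if j = k + 1 then q.coeff (k + 1) else c j, ?_⟩
    rw [Finset.sum_range_succ]
    have hq' : q = r + C (q.coeff (k + 1)) * P (k + 1) := by rw [hrdef]; ring
    conv_lhs => rw [hq', hc]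
    congr 1
    · refine Finset.sum_congr rfl fun j hj => ?_
      have hne : j ≠ k + 1 := by have := Finset.mem_range.1 hj; omega
      simp [hne]
    · simp

lemma orth_lower (hmonic : ∀ n, (P n).Monic) (hdeg : ∀ n, (P n).natDegree = n)
    (horth : ∀ j k, j ≠ k → L t (P j * P k) = 0) :
    ∀ N (q : ℝ[X]), q.natDegree < N → L t (P N * q) = 0 := by
  intro N q hq
  obtain ⟨c, hc⟩ := expand hmonic hdeg (N - 1) q (by omega)
  rw [hc, Finset.mul_sum]
  rw [Finset.sum_congr rfl (fun j _ => show P N * (C (c j) * P j) = C (c j) * (P N * P j) from by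
    ring)]
  rw [L_sum]
  refine Finset.sum_eq_zero fun j hj => ?_
  rw [L_Csmul, horth N j (by have := Finset.mem_range.1 hj; omega)]
  ring

lemma L_coeff_top (hmonic : ∀ n, (P n).Monic) (hdeg : ∀ n, (P n).natDegree = n)
    (horth : ∀ j k, j ≠ k → L t (P j * P k) = 0) :
    ∀ N (q : ℝ[X]), q.natDegree ≤ N →
      L t (P N * q) = q.coeff N * L t (P N * P N) := by
  intro N q hq
  set r := q - C (q.coeff N) * P N with hrdef
  have hq' : q = r + C (q.coeff N) * P N := by rw [hrdef]; ring
  have hrc : r.coeff N = 0 := by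
    have hc1 : (P N).coeff N = 1 := by
      have h2 := (hmonic N).coeff_natDegree
      rwa [hdeg] at h2
    simp [hrdef, coeff_C_mul, hc1]
  have hrL : L t (P N * r) = 0 := by
    rcases eq_or_ne r 0 with h0 | h0
    · rw [h0, mul_zero, L_zero]
    · have hrdeg : r.natDegree ≤ N := by
        refine le_trans (natDegree_sub_le _ _) (max_le hq ?_)
        refine le_trans (natDegree_C_mul_le _ _) (by rw [hdeg])
      have : r.natDegree ≠ N := fun hEq => by
        have := (leadingCoeff_ne_zero).2 h0
        rw [leadingCoeff, hEq] at this
        exact this hrc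
      exact orth_lower hmonic hdeg horth N r (lt_of_le_of_ne hrdeg this)
  calc L t (P N * q) = L t (P N * r) + L t (C (q.coeff N) * (P N * P N)) := by
        conv_lhs => rw [hq']
        rw [mul_add, L_add,
          show P N * (C (q.coeff N) * P N) = C (q.coeff N) * (P N * P N) from by ring]
    _ = q.coeff N * L t (P N * P N) := by rw [hrL, L_Csmul]; ring

lemma zero_of_orth (hmonic : ∀ n, (P n).Monic) (hdeg : ∀ n, (P n).natDegree = n)
    {k : ℕ} {D : ℝ[X]} (hDdeg : D.natDegree ≤ k)
    (key : ∀ j, j ≤ k → L t (P j * D) = 0) : D = 0 := by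
  obtain ⟨c, hc⟩ := expand hmonic hdeg k D hDdeg
  refine eq_zero_of_L_sq t ?_
  calc L t (D * D) = L t ((∑ j ∈ Finset.range (k + 1), C (c j) * P j) * D) := by
        rw [← hc]
    _ = L t (∑ j ∈ Finset.range (k + 1), C (c j) * (P j * D)) := by
        rw [Finset.sum_mul]
        congr 1
        exact Finset.sum_congr rfl fun j _ => by ring
    _ = ∑ j ∈ Finset.range (k + 1), c j * L t (P j * D) := by
        rw [L_sum]
        exact Finset.sum_congr rfl fun j _ => L_Csmul t _ _
    _ = 0 := Finset.sum_eq_zero fun j hj => by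
        rw [key j (by have := Finset.mem_range.1 hj; omega)]; ring

noncomputable def Qf (P : ℕ → ℝ[X]) : ℕ → ℝ[X] := fun n => C ((-1 : ℝ) ^ n) * (P n).comp (-X)

lemma Qf_comp_deg (hdeg : ∀ n, (P n).natDegree = n) (n : ℕ) :
    ((P n).comp (-X : ℝ[X])).natDegree = n := by
  rw [natDegree_comp, hdeg]
  simp

lemma Qf_deg (hdeg : ∀ n, (P n).natDegree = n) (n : ℕ) : (Qf P n).natDegree = n := by
  unfold Qf
  rw [natDegree_C_mul (by positivity), Qf_comp_deg hdeg]

lemma Qf_monic (hmonic : ∀ n, (P n).Monic) (hdeg : ∀ n, (P n).natDegree = n) (n : ℕ) :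
    (Qf P n).Monic := by
  rcases Nat.eq_zero_or_pos n with h0 | hpos
  · subst h0
    have hP0 : P 0 = 1 := (hmonic 0).natDegree_eq_zero.1 (hdeg 0)
    unfold Qf
    rw [hP0]
    simp [one_comp, monic_one]
  · have hXdeg : ((-X : ℝ[X])).natDegree ≠ 0 := by simp
    have hlc : ((P n).comp (-X : ℝ[X])).leadingCoeff = (-1 : ℝ) ^ n := by
      rw [leadingCoeff_comp hXdeg, (hmonic n).leadingCoeff, hdeg]
      simp [leadingCoeff]
    unfold Monic Qf
    rw [leadingCoeff_mul, hlc, leadingCoeff_C, ← pow_add]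
    exact Even.neg_one_pow ⟨n, rfl⟩

lemma Qf_orth (horth : ∀ j k, j ≠ k → L t (P j * P k) = 0) :
    ∀ j k, j ≠ k → L t (Qf P j * Qf P k) = 0 := by
  intro j k hjk
  have hQ : Qf P j * Qf P k = C ((-1 : ℝ) ^ j * (-1 : ℝ) ^ k) * ((P j * P k).comp (-X)) := by
    unfold Qf
    rw [mul_comp, C_mul]
    ring
  rw [hQ, L_Csmul, L_comp_neg, horth j k hjk]
  ring

lemma parity (hmonic : ∀ n, (P n).Monic) (hdeg : ∀ n, (P n).natDegree = n)
    (horth : ∀ j k, j ≠ k → L t (P j * P k) = 0) (n : ℕ) : P n = Qf P n := by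
  set D := P n - Qf P n with hD
  have hcoeffn : D.coeff n = 0 := by
    have h1 : (P n).coeff n = 1 := by
      have := (hmonic n).coeff_natDegree; rwa [hdeg] at this
    have h2 : (Qf P n).coeff n = 1 := by
      have := (Qf_monic hmonic hdeg n).coeff_natDegree
      rwa [Qf_deg hdeg n] at this
    simp [hD, h1, h2]
  have hDdeg : D.natDegree ≤ n := by
    refine le_trans (natDegree_sub_le _ _) (max_le (by rw [hdeg]) (by rw [Qf_deg hdeg n]))
  rcases eq_or_ne D 0 with h0 | h0
  · have := sub_eq_zero.mp (hD ▸ h0)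
    exact this
  · exfalso
    have hn0 : n ≠ 0 := by
      intro hn
      subst hn
      exact h0 (by
        have := eq_C_of_natDegree_le_zero hDdeg
        rw [this, hcoeffn, map_zero])
    have hDlt : D.natDegree < n := by
      rcases lt_or_eq_of_le hDdeg with h | h
      · exact h
      · exfalso
        have := (leadingCoeff_ne_zero).2 h0
        rw [leadingCoeff, h] at this
        exact this hcoeffn
    refine h0 (zero_of_orth (t := t) hmonic hdeg (k := n - 1) (by omega) ?_)
    intro j hj
    have hjn : j ≠ n := by omega
    have e1 : L t (P j * P n) = 0 := horth j n hjn
    have e2 : L t (Qf P n * P j) = 0 :=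
      orth_lower (Qf_monic hmonic hdeg) (Qf_deg hdeg) (Qf_orth horth) n (P j)
        (by rw [hdeg]; omega)
    calc L t (P j * D) = L t (P j * P n - Qf P n * P j) := by
          rw [hD]; congr 1; ring
      _ = 0 := by rw [L_sub, e1, e2, sub_zero]

lemma parity_comp (hmonic : ∀ n, (P n).Monic) (hdeg : ∀ n, (P n).natDegree = n)
    (horth : ∀ j k, j ≠ k → L t (P j * P k) = 0) (n : ℕ) :
    (P n).comp (-X) = C ((-1 : ℝ) ^ n) * P n := by
  have h := parity hmonic hdeg horth n
  have : C ((-1 : ℝ) ^ n) * P n = C ((-1 : ℝ) ^ n) * (C ((-1 : ℝ) ^ n) * (P n).comp (-X)) := by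
    conv_lhs => rw [h]
    rfl
  rw [this, ← mul_assoc, ← C_mul, ← pow_add]
  rw [Even.neg_one_pow ⟨n, rfl⟩, C_1, one_mul]

lemma parity_int (hmonic : ∀ n, (P n).Monic) (hdeg : ∀ n, (P n).natDegree = n)
    (horth : ∀ j k, j ≠ k → L t (P j * P k) = 0) (n : ℕ) :
    L t (X * (P n * P n)) = 0 := by
  have hcomp : (X * (P n * P n)).comp (-X) = -(X * (P n * P n)) := by
    rw [mul_comp, mul_comp, X_comp, parity_comp hmonic hdeg horth n]
    have h1 : ((-1 : ℝ) ^ n) * ((-1 : ℝ) ^ n) = 1 := by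
      rw [← pow_add]; exact Even.neg_one_pow ⟨n, rfl⟩
    calc -X * (C ((-1 : ℝ) ^ n) * P n * (C ((-1 : ℝ) ^ n) * P n))
        = C (((-1 : ℝ) ^ n) * ((-1 : ℝ) ^ n)) * (-(X * (P n * P n))) := by
          rw [C_mul]; ring
      _ = -(X * (P n * P n)) := by rw [h1, C_1, one_mul]
  have h2 := L_comp_neg t (X * (P n * P n))
  rw [hcomp, L_neg] at h2
  linarith

lemma recurrence (hmonic : ∀ n, (P n).Monic) (hdeg : ∀ n, (P n).natDegree = n)
    (horth : ∀ j k, j ≠ k → L t (P j * P k) = 0) (h β : ℕ → ℝ)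
    (hh : ∀ k, h k = L t (P k * P k)) (hβ0 : β 0 = 0)
    (hβ' : ∀ k, h (k + 1) = β (k + 1) * h k) (k : ℕ) :
    X * P k = P (k + 1) + C (β k) * P (k - 1) := by
  set D := X * P k - P (k + 1) - C (β k) * P (k - 1) with hDdef
  have hDdeg : D.natDegree ≤ k := by
    rw [natDegree_le_iff_coeff_eq_zero]
    intro N hN
    obtain ⟨M, rfl⟩ : ∃ M, N = M + 1 := ⟨N - 1, by omega⟩
    have c1 : (X * P k).coeff (M + 1) = (P k).coeff M := coeff_X_mul _ _
    simp only [hDdef, coeff_sub, coeff_C_mul, c1]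
    rcases eq_or_lt_of_le (show k ≤ M by omega) with hM | hM
    · subst hM
      have e1 : (P k).coeff k = 1 := by
        have := (hmonic k).coeff_natDegree; rwa [hdeg] at this
      have e2 : (P (k + 1)).coeff (k + 1) = 1 := by
        have := (hmonic (k + 1)).coeff_natDegree; rwa [hdeg] at this
      have e3 : (P (k - 1)).coeff (k + 1) = 0 :=
        coeff_eq_zero_of_natDegree_lt (by rw [hdeg]; omega)
      rw [e1, e2, e3]; ring
    · have e1 : (P k).coeff M = 0 := coeff_eq_zero_of_natDegree_lt (by rw [hdeg]; omega)
      have e2 : (P (k + 1)).coeff (M + 1) = 0 :=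
        coeff_eq_zero_of_natDegree_lt (by rw [hdeg]; omega)
      have e3 : (P (k - 1)).coeff (M + 1) = 0 :=
        coeff_eq_zero_of_natDegree_lt (by rw [hdeg]; omega)
      rw [e1, e2, e3]; ring
  have key : ∀ j, j ≤ k → L t (P j * D) = 0 := by
    intro j hj
    have hexp : P j * D = P k * (X * P j) - P (k + 1) * P j - C (β k) * (P (k - 1) * P j) := by
      rw [hDdef]; ring
    rw [hexp, L_sub, L_sub, L_Csmul]
    by_cases hjk : j = k
    · subst hjk
      have h1 : L t (P j * (X * P j)) = 0 := by
        rw [show P j * (X * P j) = X * (P j * P j) from by ring]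
        exact parity_int hmonic hdeg horth j
      have h2 : L t (P (j + 1) * P j) = 0 := horth _ _ (by omega)
      rcases Nat.eq_zero_or_pos j with hz | hk
      · subst hz
        rw [h1, h2, hβ0]; ring
      · have h3 : L t (P (j - 1) * P j) = 0 := horth _ _ (by omega)
        rw [h1, h2, h3]; ring
    · by_cases hjk1 : j + 1 = k
      · have h1 : L t (P k * (X * P j)) = h k := by
          have hd : (X * P j).natDegree = k := by
            rw [natDegree_mul X_ne_zero (hmonic j).ne_zero, natDegree_X, hdeg]; omega
          have hcoef : (X * P j).coeff k = 1 := by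
            have := (monic_X.mul (hmonic j)).coeff_natDegree
            rwa [hd] at this
          rw [L_coeff_top hmonic hdeg horth k (X * P j) (le_of_eq hd), hcoef, ← hh k]; ring
        have h2 : L t (P (k + 1) * P j) = 0 := horth _ _ (by omega)
        have h3 : L t (P (k - 1) * P j) = L t (P j * P j) := by
          rw [show k - 1 = j from by omega]
        have h4 : h k = β k * h j := by
          have h5 := hβ' j
          rwa [hjk1] at h5
        rw [h1, h2, h3, ← hh j, h4]; ring
      · have h1 : L t (P k * (X * P j)) = 0 := by
          refine orth_lower hmonic hdeg horth k (X * P j) ?_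
          rw [natDegree_mul X_ne_zero (hmonic j).ne_zero, natDegree_X, hdeg]; omega
        have h2 := horth (k + 1) j (by omega)
        have h3 := horth (k - 1) j (by omega)
        rw [h1, h2, h3]; ring
  have hD0 : D = 0 := zero_of_orth (t := t) hmonic hdeg hDdeg key
  rw [hDdef] at hD0
  linear_combination hD0

lemma step (β : ℕ → ℝ) (hrec : ∀ k, X * P k = P (k + 1) + C (β k) * P (k - 1)) (n a j : ℕ) :
    L t (P n * (X ^ (a + 1) * P j))
      = L t (P n * (X ^ a * P (j + 1))) + β j * L t (P n * (X ^ a * P (j - 1))) := by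
  have hp : X ^ (a + 1) * P j = X ^ a * P (j + 1) + C (β j) * (X ^ a * P (j - 1)) := by
    calc X ^ (a + 1) * P j = X ^ a * (X * P j) := by ring
      _ = X ^ a * (P (j + 1) + C (β j) * P (j - 1)) := by rw [hrec j]
      _ = _ := by ring
  rw [hp, mul_add, L_add,
    show P n * (C (β j) * (X ^ a * P (j - 1))) = C (β j) * (P n * (X ^ a * P (j - 1))) from by
      ring,
    L_Csmul]

lemma lowdeg (hmonic : ∀ n, (P n).Monic) (hdeg : ∀ n, (P n).natDegree = n)
    (horth : ∀ j k, j ≠ k → L t (P j * P k) = 0) {n a j : ℕ} (hlt : a + j < n) :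
    L t (P n * (X ^ a * P j)) = 0 := by
  refine orth_lower hmonic hdeg horth n _ ?_
  rw [natDegree_mul (pow_ne_zero _ X_ne_zero) (hmonic j).ne_zero, natDegree_pow, natDegree_X,
    hdeg]
  omega

lemma topdeg (hmonic : ∀ n, (P n).Monic) (hdeg : ∀ n, (P n).natDegree = n)
    (horth : ∀ j k, j ≠ k → L t (P j * P k) = 0) {n a j : ℕ} (heq : a + j = n) :
    L t (P n * (X ^ a * P j)) = L t (P n * P n) := by
  have hd : (X ^ a * P j).natDegree = n := by
    rw [natDegree_mul (pow_ne_zero _ X_ne_zero) (hmonic j).ne_zero, natDegree_pow, natDegree_X,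
      hdeg]
    omega
  have hcoef : (X ^ a * P j).coeff n = 1 := by
    have := ((monic_X_pow a).mul (hmonic j)).coeff_natDegree
    rwa [hd] at this
  rw [L_coeff_top hmonic hdeg horth n _ (le_of_eq hd), hcoef, one_mul]

lemma base_ne (horth : ∀ j k, j ≠ k → L t (P j * P k) = 0) {n j : ℕ} (hne : j ≠ n) :
    L t (P n * (X ^ 0 * P j)) = 0 := by
  rw [pow_zero, one_mul]
  exact horth n j (Ne.symm hne)

end Family

end Stmt19

theorem stmt19 (t : ℝ) (P : ℕ → Polynomial ℝ)
    (hmonic : ∀ n, (P n).Monic) (hdeg : ∀ n, (P n).natDegree = n)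
    (horth : ∀ j k, j ≠ k →
      ∫ x : ℝ, (P j).eval x * (P k).eval x * Real.exp (-x ^ 6 + t * x ^ 2) = 0)
    (h : ℕ → ℝ) (hh : ∀ n, h n = ∫ x : ℝ, ((P n).eval x) ^ 2 * Real.exp (-x ^ 6 + t * x ^ 2))
    (β : ℕ → ℝ) (hβ0 : β 0 = 0) (hβ : ∀ n, β (n + 1) = h (n + 1) / h n)
    (n : ℕ) (hn : 2 ≤ n) :
    6 * β n *
        (β (n - 2) * β (n - 1) + (β (n - 1)) ^ 2 + 2 * β (n - 1) * β n
          + β (n - 1) * β (n + 1) + (β n) ^ 2 + 2 * β n * β (n + 1)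
          + (β (n + 1)) ^ 2 + β (n + 1) * β (n + 2))
      - 2 * t * β n = n := by
  classical
  obtain ⟨m, rfl⟩ : ∃ m, n = m + 2 := ⟨n - 2, by omega⟩
  -- translate hypotheses into the `L` language
  have horth' : ∀ j k, j ≠ k → Stmt19.L t (P j * P k) = 0 := by
    intro j k hjk
    have hfun : (fun x : ℝ => (P j * P k).eval x * Stmt19.W t x)
        = fun x : ℝ => (P j).eval x * (P k).eval x * Real.exp (-x ^ 6 + t * x ^ 2) := by
      funext x; simp [Stmt19.W, Polynomial.eval_mul]
    unfold Stmt19.L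
    rw [hfun]
    exact horth j k hjk
  have hh' : ∀ k, h k = Stmt19.L t (P k * P k) := by
    intro k
    have hfun : (fun x : ℝ => (P k * P k).eval x * Stmt19.W t x)
        = fun x : ℝ => ((P k).eval x) ^ 2 * Real.exp (-x ^ 6 + t * x ^ 2) := by
      funext x; simp [Stmt19.W, Polynomial.eval_mul]; ring
    unfold Stmt19.L
    rw [hfun]
    exact hh k
  have h_pos : ∀ k, 0 < h k := by
    intro k
    rw [hh' k]
    exact Stmt19.L_sq_pos t (hmonic k).ne_zero
  have hβ' : ∀ k, h (k + 1) = β (k + 1) * h k := by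
    intro k
    rw [hβ k]
    field_simp [(h_pos k).ne']
  have hrec := Stmt19.recurrence hmonic hdeg horth' h β hh' hβ0 hβ'
  have hstep := Stmt19.step (t := t) (P := P) β hrec (m + 2)
  have hbase : ∀ j, j ≠ m + 2 → Stmt19.L t (P (m + 2) * (X ^ 0 * P j)) = 0 :=
    fun j hj => Stmt19.base_ne horth' hj
  have htop0 : Stmt19.L t (P (m + 2) * (X ^ 0 * P (m + 2))) = h (m + 2) := by
    rw [Stmt19.topdeg hmonic hdeg horth' (by omega), ← hh']
  -- the ladder of moments
  have h15 : Stmt19.L t (P (m + 2) * (X ^ 1 * P (m + 5))) = 0 := by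
    rw [hstep 0 (m + 5), show m + 5 - 1 = m + 4 from by omega, hbase (m + 6) (by omega),
      hbase (m + 4) (by omega)]
    ring
  have h13 : Stmt19.L t (P (m + 2) * (X ^ 1 * P (m + 3))) = β (m + 3) * h (m + 2) := by
    rw [hstep 0 (m + 3), show m + 3 - 1 = m + 2 from by omega, hbase (m + 4) (by omega), htop0]
    ring
  have h11 : Stmt19.L t (P (m + 2) * (X ^ 1 * P (m + 1))) = h (m + 2) := by
    rw [hstep 0 (m + 1), show m + 1 - 1 = m from by omega, hbase m (by omega), htop0]
    ring
  have h1m1 : Stmt19.L t (P (m + 2) * (X ^ 1 * P (m - 1))) = 0 :=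
    Stmt19.lowdeg hmonic hdeg horth' (by omega)
  have h24 : Stmt19.L t (P (m + 2) * (X ^ 2 * P (m + 4)))
      = β (m + 4) * β (m + 3) * h (m + 2) := by
    rw [hstep 1 (m + 4), show m + 4 - 1 = m + 3 from by omega, h15, h13]
    ring
  have h22 : Stmt19.L t (P (m + 2) * (X ^ 2 * P (m + 2)))
      = (β (m + 3) + β (m + 2)) * h (m + 2) := by
    rw [hstep 1 (m + 2), show m + 2 - 1 = m + 1 from by omega, h13, h11]
    ring
  have h20 : Stmt19.L t (P (m + 2) * (X ^ 2 * P m)) = h (m + 2) := by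
    rw [hstep 1 m, h11, h1m1]
    ring
  have h33 : Stmt19.L t (P (m + 2) * (X ^ 3 * P (m + 3)))
      = (β (m + 4) * β (m + 3) + β (m + 3) * β (m + 3) + β (m + 3) * β (m + 2)) * h (m + 2) := by
    rw [hstep 2 (m + 3), show m + 3 - 1 = m + 2 from by omega, h24, h22]
    ring
  have h31 : Stmt19.L t (P (m + 2) * (X ^ 3 * P (m + 1)))
      = (β (m + 3) + β (m + 2) + β (m + 1)) * h (m + 2) := by
    rw [hstep 2 (m + 1), show m + 1 - 1 = m from by omega, h22, h20]
    ring
  have h3m1 : β m * Stmt19.L t (P (m + 2) * (X ^ 3 * P (m - 1))) = β m * h (m + 2) := by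
    rcases Nat.eq_zero_or_pos m with hz | hp
    · subst hz
      simp only [hβ0, zero_mul]
    · have hx : Stmt19.L t (P (m + 2) * (X ^ 3 * P (m - 1))) = h (m + 2) := by
        rw [Stmt19.topdeg hmonic hdeg horth' (by omega), ← hh']
      rw [hx]
  have h42 : Stmt19.L t (P (m + 2) * (X ^ 4 * P (m + 2)))
      = (β (m + 4) * β (m + 3) + β (m + 3) * β (m + 3) + β (m + 3) * β (m + 2)
          + β (m + 2) * (β (m + 3) + β (m + 2) + β (m + 1))) * h (m + 2) := by
    rw [hstep 3 (m + 2), show m + 2 - 1 = m + 1 from by omega, h33, h31]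
    ring
  have h40 : Stmt19.L t (P (m + 2) * (X ^ 4 * P m))
      = (β (m + 3) + β (m + 2) + β (m + 1) + β m) * h (m + 2) := by
    rw [hstep 3 m, h31, h3m1]
    ring
  have h51 : Stmt19.L t (P (m + 2) * (X ^ 5 * P (m + 1)))
      = (β m * β (m + 1) + β (m + 1) ^ 2 + 2 * β (m + 1) * β (m + 2)
          + β (m + 1) * β (m + 3) + β (m + 2) ^ 2 + 2 * β (m + 2) * β (m + 3)
          + β (m + 3) ^ 2 + β (m + 3) * β (m + 4)) * h (m + 2) := by
    rw [hstep 4 (m + 1), show m + 1 - 1 = m from by omega, h42, h40]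
    ring
  -- the string equation from integration by parts
  have hder := Stmt19.L_ibp t (P (m + 2) * P (m + 1))
  rw [Polynomial.derivative_mul] at hder
  rw [Stmt19.L_add, Stmt19.L_add, Stmt19.L_add, Stmt19.L_Csmul, Stmt19.L_Csmul] at hder
  have hd1 : Stmt19.L t (Polynomial.derivative (P (m + 2)) * P (m + 1))
      = ((m : ℝ) + 2) * h (m + 1) := by
    rw [show Polynomial.derivative (P (m + 2)) * P (m + 1)
        = P (m + 1) * Polynomial.derivative (P (m + 2)) from mul_comm _ _]
    have hdd : (Polynomial.derivative (P (m + 2))).natDegree ≤ m + 1 := by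
      have := Polynomial.natDegree_derivative_le (P (m + 2))
      rw [hdeg] at this
      omega
    have hcoef : (Polynomial.derivative (P (m + 2))).coeff (m + 1) = (m : ℝ) + 2 := by
      rw [Polynomial.coeff_derivative]
      have hc : (P (m + 2)).coeff (m + 2) = 1 := by
        have := (hmonic (m + 2)).coeff_natDegree
        rwa [hdeg] at this
      rw [hc]
      push_cast
      ring
    rw [Stmt19.L_coeff_top hmonic hdeg horth' (m + 1) _ hdd, hcoef, ← hh']
  have hd2 : Stmt19.L t (P (m + 2) * Polynomial.derivative (P (m + 1))) = 0 := by
    refine Stmt19.orth_lower hmonic hdeg horth' (m + 2) _ ?_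
    have := Polynomial.natDegree_derivative_le (P (m + 1))
    rw [hdeg] at this
    omega
  have hd3 : Stmt19.L t (X ^ 5 * (P (m + 2) * P (m + 1)))
      = Stmt19.L t (P (m + 2) * (X ^ 5 * P (m + 1))) := by
    congr 1
    ring
  have hd4 : Stmt19.L t (X * (P (m + 2) * P (m + 1)))
      = Stmt19.L t (P (m + 2) * (X ^ 1 * P (m + 1))) := by
    congr 1
    ring
  rw [hd1, hd2, hd3, hd4, h51, h11, hβ' (m + 1)] at hder
  -- finish
  have hfin : (6 * β (m + 2) *
        (β m * β (m + 1) + β (m + 1) ^ 2 + 2 * β (m + 1) * β (m + 2)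
          + β (m + 1) * β (m + 3) + β (m + 2) ^ 2 + 2 * β (m + 2) * β (m + 3)
          + β (m + 3) ^ 2 + β (m + 3) * β (m + 4))
      - 2 * t * β (m + 2) - ((m : ℝ) + 2)) * h (m + 1) = 0 := by
    linear_combination -hder
  have hne := (h_pos (m + 1)).ne'
  rcases mul_eq_zero.1 hfin with h' | h'
  · simp only [show m + 2 - 2 = m from by omega, show m + 2 - 1 = m + 1 from by omega]
    push_cast
    linear_combination h'
  · exact absurd h' hne
end
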